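/- Fix reals c, q, L > 0, D > 0 and Q₂ ∈ ℝ. Then the set B₂ ⊆ ℝ² is symmetric and star-shaped with respect to the origin; more precisely, if (x, y) lies in the closure of B₂, then (t·x, t·y) ∈ B₂ for every t with −1 < t < 1. -/

import Mathlib

open Real

noncomputable section

/-- the ellipse norm `‖(u₁,u₂)‖_@ = √(u₁² + c u₂²)`. -/
def nAt (c : ℝ) (u : ℝ × ℝ) : ℝ := Real.sqrt (u.1 ^ 2 + c * u.2 ^ 2)

/-- `Θ_x = √(x² + c q²)`. -/
def thetaAt (c q x : ℝ) : ℝ := Real.sqrt (x ^ 2 + c * q ^ 2)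

/-- the set `B₂`. -/
def B2 (c q L D Q2 : ℝ) : Set (ℝ × ℝ) :=
  {p | ∀ s i : ℤ, i ≠ 0 →
    D * q * |p.2| / thetaAt c q p.1 <
      nAt c
        (((s : ℝ) * q + (i : ℝ) * Q2) * p.1 * p.2 / (thetaAt c q p.1) ^ 2 -
            (i : ℝ) * L,
          ((s : ℝ) * q + (i : ℝ) * Q2) * q * p.2 / (thetaAt c q p.1) ^ 2)}

lemma aux_clear (T a b d ζ c : ℝ) (hT : 0 < T)
    (h : a / T ≤ (b / T - ζ) ^ 2 + c * (d / T) ^ 2) :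
    a * T ≤ (b - ζ * T) ^ 2 + c * d ^ 2 := by
  have h2 := mul_le_mul_of_nonneg_right h (by positivity : (0:ℝ) ≤ T ^ 2)
  have e1 : a / T * T ^ 2 = a * T := by field_simp
  have e2 : ((b / T - ζ) ^ 2 + c * (d / T) ^ 2) * T ^ 2 =
      (b - ζ * T) ^ 2 + c * d ^ 2 := by field_simp
  rwa [e1, e2] at h2

lemma aux_unclear (T a b d ζ c : ℝ) (hT : 0 < T)
    (h : a * T < (b - ζ * T) ^ 2 + c * d ^ 2) :
    a / T < (b / T - ζ) ^ 2 + c * (d / T) ^ 2 := by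
  have e1 : a / T * T ^ 2 = a * T := by field_simp
  have e2 : ((b / T - ζ) ^ 2 + c * (d / T) ^ 2) * T ^ 2 =
      (b - ζ * T) ^ 2 + c * d ^ 2 := by field_simp
  rw [← mul_lt_mul_iff_of_pos_right (pow_pos hT 2), e1, e2]
  exact h

theorem statement10
    (c q L D Q2 : ℝ) (hc : 0 < c) (hq : 0 < q) (hL : 0 < L) (hD : 0 < D)
    (x y : ℝ) (hxy : (x, y) ∈ closure (B2 c q L D Q2))
    (t : ℝ) (ht1 : -1 < t) (ht2 : t < 1) :
    (t * x, t * y) ∈ B2 c q L D Q2 := by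
  have hθpos : ∀ z : ℝ, 0 < thetaAt c q z := fun z =>
    Real.sqrt_pos.2 (by positivity)
  have hθc : Continuous fun p : ℝ × ℝ => thetaAt c q p.1 := by
    unfold thetaAt
    exact Real.continuous_sqrt.comp (by continuity)
  simp only [B2, Set.mem_setOf_eq]
  intro s i hi
  -- closure gives the weak inequality at (x, y)
  have hle : D * q * |y| / thetaAt c q x ≤
      nAt c
        (((s : ℝ) * q + (i : ℝ) * Q2) * x * y / (thetaAt c q x) ^ 2 -
            (i : ℝ) * L,
          ((s : ℝ) * q + (i : ℝ) * Q2) * q * y / (thetaAt c q x) ^ 2) := by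
    have hsub : closure (B2 c q L D Q2) ⊆
        {p : ℝ × ℝ | D * q * |p.2| / thetaAt c q p.1 ≤
          nAt c
            (((s : ℝ) * q + (i : ℝ) * Q2) * p.1 * p.2 / (thetaAt c q p.1) ^ 2 -
                (i : ℝ) * L,
              ((s : ℝ) * q + (i : ℝ) * Q2) * q * p.2 / (thetaAt c q p.1) ^ 2)} := by
      apply closure_minimal
      · intro p hp
        exact (hp s i hi).le
      · apply isClosed_le
        · exact (continuous_const.mul (continuous_abs.comp continuous_snd)).div hθc
            (fun p => (hθpos p.1).ne')
        · unfold nAt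
          apply Real.continuous_sqrt.comp
          have hθ2 : ∀ p : ℝ × ℝ, (thetaAt c q p.1) ^ 2 ≠ 0 :=
            fun p => pow_ne_zero _ (hθpos p.1).ne'
          apply Continuous.add
          · apply Continuous.pow
            apply Continuous.sub _ continuous_const
            exact Continuous.div (by continuity) (hθc.pow 2) hθ2
          · exact continuous_const.mul
              ((Continuous.div (by continuity) (hθc.pow 2) hθ2).pow 2)
    exact hsub hxy
  set β := (s : ℝ) * q + (i : ℝ) * Q2 with hβ
  set ζ := (i : ℝ) * L with hζ
  have hζ2 : 0 < ζ ^ 2 := by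
    have hi' : (i : ℝ) ≠ 0 := Int.cast_ne_zero.2 hi
    positivity
  have hT : (thetaAt c q x) ^ 2 = x ^ 2 + c * q ^ 2 :=
    Real.sq_sqrt (by positivity)
  have hTt : (thetaAt c q (t * x)) ^ 2 = (t * x) ^ 2 + c * q ^ 2 :=
    Real.sq_sqrt (by positivity)
  have hTpos : (0:ℝ) < x ^ 2 + c * q ^ 2 := by positivity
  have hTtpos : (0:ℝ) < (t * x) ^ 2 + c * q ^ 2 := by positivity
  -- square the hypothesis
  have h1 : (D * q * |y| / thetaAt c q x) ^ 2 ≤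
      (β * x * y / (thetaAt c q x) ^ 2 - ζ) ^ 2 +
        c * (β * q * y / (thetaAt c q x) ^ 2) ^ 2 := by
    unfold nAt at hle
    have h0 : (0:ℝ) ≤ D * q * |y| / thetaAt c q x :=
      div_nonneg (by positivity) (hθpos x).le
    have h0' : (0:ℝ) ≤ (β * x * y / (thetaAt c q x) ^ 2 - ζ) ^ 2 +
        c * (β * q * y / (thetaAt c q x) ^ 2) ^ 2 := by positivity
    exact (Real.le_sqrt h0 h0').1 hle
  rw [div_pow, hT] at h1
  have h2 := aux_clear _ _ _ _ _ _ hTpos h1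
  simp only [mul_pow, sq_abs] at h2
  have hkey : D ^ 2 * q ^ 2 * y ^ 2 + 2 * β * ζ * x * y ≤
      β ^ 2 * y ^ 2 + ζ ^ 2 * (x ^ 2 + c * q ^ 2) := by
    have h3 : (D ^ 2 * q ^ 2 * y ^ 2 + 2 * β * ζ * x * y) * (x ^ 2 + c * q ^ 2) ≤
        (β ^ 2 * y ^ 2 + ζ ^ 2 * (x ^ 2 + c * q ^ 2)) * (x ^ 2 + c * q ^ 2) := by
      linarith only [h2]
    exact le_of_mul_le_mul_right h3 hTpos
  have habst : |t| < 1 := abs_lt.2 ⟨ht1, ht2⟩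
  have ht2' : t ^ 2 < 1 := by
    rw [← sq_abs]
    exact pow_lt_one₀ (abs_nonneg t) habst two_ne_zero
  have hTlt : t ^ 2 * (x ^ 2 + c * q ^ 2) < (t * x) ^ 2 + c * q ^ 2 := by
    have h5 : t ^ 2 * (c * q ^ 2) < 1 * (c * q ^ 2) :=
      mul_lt_mul_of_pos_right ht2' (by positivity)
    linarith only [h5]
  have hG' : D ^ 2 * q ^ 2 * (t * y) ^ 2 + 2 * β * ζ * (t * x) * (t * y) <
      β ^ 2 * (t * y) ^ 2 + ζ ^ 2 * ((t * x) ^ 2 + c * q ^ 2) := by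
    linarith only [mul_le_mul_of_nonneg_left hkey (sq_nonneg t),
      mul_lt_mul_of_pos_left hTlt hζ2]
  have hgoalpoly : (D * q * |t * y|) ^ 2 * ((t * x) ^ 2 + c * q ^ 2) <
      (β * (t * x) * (t * y) - ζ * ((t * x) ^ 2 + c * q ^ 2)) ^ 2 +
        c * (β * q * (t * y)) ^ 2 := by
    simp only [mul_pow, sq_abs]
    have h4 := (mul_lt_mul_iff_of_pos_right hTtpos).2 hG'
    linarith only [h4]
  -- conclude
  show D * q * |t * y| / thetaAt c q (t * x) < nAt c _
  unfold nAt
  rw [Real.lt_sqrt (div_nonneg (by positivity) (hθpos (t * x)).le), div_pow, hTt]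
  exact aux_unclear _ _ _ _ _ _ hTtpos hgoalpoly
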